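/- Let S be a vertex subset of a finite graph G achieving maximum deficiency df(S), and among such sets minimizing Df(S). Then every odd S-component is factor-critical. -/

import Mathlib

open SimpleGraph Set

variable {V : Type*} [Fintype V] [DecidableEq V]

/-- The vertex set (in `V`) of a connected component of the graph induced on `B`. -/
def compSupp (G : SimpleGraph V) (B : Set V)
    (c : (G.induce B).ConnectedComponent) : Set V :=
  Subtype.val '' c.supp

/-- `A` is (the vertex set of) a connected component of `G` restricted to `B`. -/
def IsCompOf (G : SimpleGraph V) (B : Set V) (A : Set V) : Prop :=
  ∃ c : (G.induce B).ConnectedComponent, A = compSupp G B c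

/-- The number of odd connected components of `G` restricted to `B`. -/
noncomputable def oddComps (G : SimpleGraph V) (B : Set V) : ℕ :=
  Set.ncard {c : (G.induce B).ConnectedComponent | Odd (compSupp G B c).ncard}

/-- The deficiency `df(S) = od(S) - |S|`. -/
noncomputable def df (G : SimpleGraph V) (S : Set V) : ℤ :=
  (oddComps G Sᶜ : ℤ) - S.ncard

/-- The induced subgraph on `A` has a perfect matching. -/
def HasPM (G : SimpleGraph V) (A : Set V) : Prop :=
  ∃ M : Subgraph (G.induce A), M.IsPerfectMatching

/-- `Df(S)`: total number of vertices in components of `G - S` with no perfect matching. -/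
noncomputable def Df (G : SimpleGraph V) (S : Set V) : ℕ :=
  Set.ncard (⋃ c ∈ {c : (G.induce Sᶜ).ConnectedComponent |
    ¬ HasPM G (compSupp G Sᶜ c)}, compSupp G Sᶜ c)

/-- The set of `M`-exposed vertices. -/
def exposed (G : SimpleGraph V) (M : Subgraph G) : Set V :=
  {v | v ∉ M.support}

/-- `A` induces a factor-critical graph. -/
def FactorCritical (G : SimpleGraph V) (A : Set V) : Prop :=
  ∀ v ∈ A, HasPM G (A \ {v})

/-- The neighborhood of `T ⊆ S` in the bipartite minor `⟨G,S⟩`: the odd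
`S`-components adjacent to some vertex of `T`. -/
def minorNbhd (G : SimpleGraph V) (S T : Set V) :
    Set (G.induce Sᶜ).ConnectedComponent :=
  {c | Odd (compSupp G Sᶜ c).ncard ∧ ∃ u ∈ T, ∃ w ∈ compSupp G Sᶜ c, G.Adj u w}

/-- `S` is a Gallai-Edmonds set of `G`. -/
def GallaiEdmonds (G : SimpleGraph V) (S : Set V) : Prop :=
  (∀ c : (G.induce Sᶜ).ConnectedComponent,
      Even (compSupp G Sᶜ c).ncard → HasPM G (compSupp G Sᶜ c)) ∧
  (∀ c : (G.induce Sᶜ).ConnectedComponent,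
      Odd (compSupp G Sᶜ c).ncard → FactorCritical G (compSupp G Sᶜ c)) ∧
  (∀ T ⊆ S, T.Nonempty → T.ncard + 1 ≤ (minorNbhd G S T).ncard)

/-- `w` and `w'` lie in the same `S`-component. -/
def SameComp (G : SimpleGraph V) (S : Set V) (w w' : V) : Prop :=
  ∃ c : (G.induce Sᶜ).ConnectedComponent,
    w ∈ compSupp G Sᶜ c ∧ w' ∈ compSupp G Sᶜ c

/-- `M` is a maximum matching of `G`. -/
def IsMaximumMatching (G : SimpleGraph V) (M : Subgraph G) : Prop :=
  M.IsMatching ∧ ∀ M' : Subgraph G, M'.IsMatching →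
    M'.edgeSet.ncard ≤ M.edgeSet.ncard
set_option linter.unusedSectionVars false
set_option linter.unusedVariables false

section Basic
variable {G : SimpleGraph V} {D D' A A' C W : Set V}

lemma mem_compSupp {c : (G.induce D).ConnectedComponent} {x : V} :
    x ∈ compSupp G D c ↔ ∃ hx : x ∈ D, (G.induce D).connectedComponentMk ⟨x, hx⟩ = c := by
  constructor
  · rintro ⟨⟨y, hy⟩, hmem, rfl⟩
    exact ⟨hy, hmem⟩
  · rintro ⟨hx, hmk⟩
    exact ⟨⟨x, hx⟩, hmk, rfl⟩

lemma isCompOf_subset (h : IsCompOf G D A) : A ⊆ D := by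
  obtain ⟨c, rfl⟩ := h
  rintro x hx
  exact (mem_compSupp.mp hx).choose

lemma isCompOf_nonempty (h : IsCompOf G D A) : A.Nonempty := by
  obtain ⟨c, rfl⟩ := h
  obtain ⟨v, hv⟩ := c.exists_rep
  exact ⟨v.val, mem_compSupp.mpr ⟨v.prop, hv⟩⟩

lemma isCompOf_closed (h : IsCompOf G D A) {x y : V} (hx : x ∈ A) (hy : y ∈ D)
    (hadj : G.Adj x y) : y ∈ A := by
  obtain ⟨c, rfl⟩ := h
  obtain ⟨hxD, hmk⟩ := mem_compSupp.mp hx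
  refine mem_compSupp.mpr ⟨hy, ?_⟩
  rw [← hmk]
  exact ConnectedComponent.connectedComponentMk_eq_of_adj
    (by exact hadj.symm : (G.induce D).Adj ⟨y, hy⟩ ⟨x, hxD⟩)

/-- walk stays in a closed set -/
lemma walk_mem_closed (hcl : ∀ x ∈ A, ∀ y ∈ D, G.Adj x y → y ∈ A)
    {u v : ↥D} (p : (G.induce D).Walk u v) (hu : ↑u ∈ A) : ↑v ∈ A := by
  induction p with
  | nil => exact hu
  | @cons a b c h p ih => exact ih (hcl _ hu _ b.prop h)

/-- transfer reachability along a walk whose support lies in `A' ⊆ D'` -/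
lemma reachable_transfer {u v : ↥D} (p : (G.induce D).Walk u v)
    (hA : ∀ z ∈ p.support, ↑z ∈ A') (hsub : A' ⊆ D') :
    ∀ (hu : ↑u ∈ D') (hv : ↑v ∈ D'), (G.induce D').Reachable ⟨↑u, hu⟩ ⟨↑v, hv⟩ := by
  induction p with
  | nil => intro hu hv; rfl
  | @cons a b c h p ih =>
    intro hu hv
    have hb : ↑b ∈ D' := hsub (hA b (by simp [Walk.support_cons]))
    have h1 : (G.induce D').Adj ⟨↑a, hu⟩ ⟨↑b, hb⟩ := by exact h
    exact (h1.reachable).trans (ih (fun z hz => hA z (by simp [Walk.support_cons, hz])) hb hv)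

lemma isCompOf_of {a : V} (hsub : A ⊆ D) (ha : a ∈ A)
    (hconn : ∀ x (hx : x ∈ A), (G.induce D).Reachable ⟨a, hsub ha⟩ ⟨x, hsub hx⟩)
    (hcl : ∀ x ∈ A, ∀ y ∈ D, G.Adj x y → y ∈ A) : IsCompOf G D A := by
  refine ⟨(G.induce D).connectedComponentMk ⟨a, hsub ha⟩, ?_⟩
  ext x
  constructor
  · intro hx
    exact mem_compSupp.mpr ⟨hsub hx, ConnectedComponent.sound (hconn x hx).symm⟩
  · intro hx
    obtain ⟨hxD, hmk⟩ := mem_compSupp.mp hx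
    have hreach : (G.induce D).Reachable ⟨a, hsub ha⟩ ⟨x, hxD⟩ :=
      ConnectedComponent.exact hmk.symm
    obtain ⟨p⟩ := hreach
    exact walk_mem_closed hcl p ha

end Basic
section Basic2
variable {G : SimpleGraph V} {D D' A A' C W : Set V}

lemma isCompOf_reach (h : IsCompOf G D A) {x y : V} (hx : x ∈ A) (hy : y ∈ A) :
    ∀ (hx' : x ∈ D) (hy' : y ∈ D), (G.induce D).Reachable ⟨x, hx'⟩ ⟨y, hy'⟩ := by
  intro hx' hy'
  obtain ⟨c, rfl⟩ := h
  obtain ⟨hx2, hmkx⟩ := mem_compSupp.mp hx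
  obtain ⟨hy2, hmky⟩ := mem_compSupp.mp hy
  have : (G.induce D).connectedComponentMk ⟨x, hx'⟩ = (G.induce D).connectedComponentMk ⟨y, hy'⟩ := by
    rw [(by rfl : (⟨x, hx'⟩ : ↥D) = ⟨x, hx2⟩), (by rfl : (⟨y, hy'⟩ : ↥D) = ⟨y, hy2⟩), hmkx, hmky]
  exact ConnectedComponent.exact this

lemma isCompOf_disjoint (h : IsCompOf G D A) (h' : IsCompOf G D A') (hne : A ≠ A') :
    Disjoint A A' := by
  rw [Set.disjoint_left]
  intro x hx hx'
  apply hne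
  obtain ⟨c, rfl⟩ := h
  obtain ⟨c', rfl⟩ := h'
  obtain ⟨h1, h2⟩ := mem_compSupp.mp hx
  obtain ⟨h1', h2'⟩ := mem_compSupp.mp hx'
  rw [← h2, ← h2']

lemma sUnion_isCompOf : ⋃₀ {A | IsCompOf G D A} = D := by
  apply Set.Subset.antisymm
  · rintro x ⟨A, hA, hx⟩
    exact isCompOf_subset hA hx
  · intro x hx
    exact ⟨compSupp G D ((G.induce D).connectedComponentMk ⟨x, hx⟩), ⟨_, rfl⟩,
      mem_compSupp.mpr ⟨hx, rfl⟩⟩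

lemma walk_support_mem_closed (hcl : ∀ x ∈ A, ∀ y ∈ D, G.Adj x y → y ∈ A)
    {u v : ↥D} (p : (G.induce D).Walk u v) (hu : ↑u ∈ A) :
    ∀ z ∈ p.support, (z : V) ∈ A := fun z hz =>
  walk_mem_closed hcl (p.takeUntil z hz) hu

/-- a component stays a component in a larger ground set if it has no outside neighbours -/
lemma isCompOf_grow (h : IsCompOf G D A) (hDD : D ⊆ D')
    (hno : ∀ x ∈ A, ∀ y ∈ D' \ D, ¬ G.Adj x y) : IsCompOf G D' A := by
  obtain ⟨a, ha⟩ := isCompOf_nonempty h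
  have hsub : A ⊆ D' := (isCompOf_subset h).trans hDD
  refine isCompOf_of hsub ha ?_ ?_
  · intro x hx
    obtain ⟨p⟩ := isCompOf_reach h ha hx (isCompOf_subset h ha) (isCompOf_subset h hx)
    exact reachable_transfer p
      (walk_support_mem_closed (fun u hu y hy hadj => isCompOf_closed h hu hy hadj) p ha)
      hsub _ _
  · intro x hx y hy hadj
    by_cases hyD : y ∈ D
    · exact isCompOf_closed h hx hyD hadj
    · exact absurd hadj (hno x hx y ⟨hy, hyD⟩)

/-- Key partition lemma. -/
lemma isCompOf_sdiff (hC : IsCompOf G D C) (hW : W ⊆ C) (A : Set V) :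
    IsCompOf G (D \ W) A ↔ (IsCompOf G D A ∧ A ≠ C) ∨ IsCompOf G (C \ W) A := by
  have hCD : C ⊆ D := isCompOf_subset hC
  constructor
  · intro h
    have hsub : A ⊆ D \ W := isCompOf_subset h
    obtain ⟨a, ha⟩ := isCompOf_nonempty h
    by_cases hint : (A ∩ C).Nonempty
    · -- A is a component of C \ W
      obtain ⟨b, hbA, hbC⟩ := hint
      right
      have hAC : A ⊆ C \ W := by
        intro x hx
        refine ⟨?_, (hsub hx).2⟩
        obtain ⟨p⟩ := isCompOf_reach h hbA hx (hsub hbA) (hsub hx)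
        exact walk_support_mem_closed
          (fun u hu y hy hadj => isCompOf_closed hC hu hy.1 hadj) p hbC _ p.end_mem_support
      refine isCompOf_of hAC ha ?_ ?_
      · intro x hx
        obtain ⟨p⟩ := isCompOf_reach h ha hx (hsub ha) (hsub hx)
        exact reachable_transfer p
          (walk_support_mem_closed (fun u hu y hy hadj => isCompOf_closed h hu hy hadj) p ha)
          hAC _ _
      · intro x hx y hy hadj
        exact isCompOf_closed h hx ⟨hCD hy.1, hy.2⟩ hadj
    · -- A is an old component, distinct from C
      left
      have hACd : ∀ x ∈ A, x ∉ C := by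
        intro x hx hxC
        exact hint ⟨x, hx, hxC⟩
      constructor
      · refine isCompOf_grow h diff_subset ?_
        intro x hx y hy hadj
        have hyW : y ∈ W := by
          by_contra hyW
          exact hy.2 ⟨hy.1, hyW⟩
        exact hACd x hx (isCompOf_closed hC (hW hyW) (hsub hx).1 hadj.symm)
      · intro hAC
        exact hACd a ha (hAC ▸ ha)
  · rintro (⟨h, hne⟩ | h)
    · have hdisj := isCompOf_disjoint h hC hne
      have hsub : A ⊆ D \ W := fun x hx =>
        ⟨isCompOf_subset h hx, fun hxW => (Set.disjoint_left.mp hdisj hx) (hW hxW)⟩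
      obtain ⟨a, ha⟩ := isCompOf_nonempty h
      refine isCompOf_of hsub ha ?_ ?_
      · intro x hx
        obtain ⟨p⟩ := isCompOf_reach h ha hx (isCompOf_subset h ha) (isCompOf_subset h hx)
        exact reachable_transfer p
          (walk_support_mem_closed (fun u hu y hy hadj => isCompOf_closed h hu hy hadj) p ha)
          hsub _ _
      · intro x hx y hy hadj
        exact isCompOf_closed h hx hy.1 hadj
    · have hsub0 : A ⊆ C \ W := isCompOf_subset h
      have hsub : A ⊆ D \ W := fun x hx => ⟨hCD (hsub0 hx).1, (hsub0 hx).2⟩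
      obtain ⟨a, ha⟩ := isCompOf_nonempty h
      refine isCompOf_of hsub ha ?_ ?_
      · intro x hx
        obtain ⟨p⟩ := isCompOf_reach h ha hx (hsub0 ha) (hsub0 hx)
        exact reachable_transfer p
          (walk_support_mem_closed (fun u hu y hy hadj => isCompOf_closed h hu hy hadj) p ha)
          hsub _ _
      · intro x hx y hy hadj
        have hyC : y ∈ C := isCompOf_closed hC (hsub0 hx).1 hy.1 hadj
        exact isCompOf_closed h hx ⟨hyC, hy.2⟩ hadj

end Basic2
section Counting
variable {G : SimpleGraph V} {D A C W : Set V}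

/-- parity of a disjoint sUnion -/
lemma parity_sUnion (F : Set (Set V)) (hdisj : F.Pairwise Disjoint) :
    (⋃₀ F).ncard % 2 = {A ∈ F | Odd A.ncard}.ncard % 2 := by
  revert hdisj
  refine Set.Finite.induction_on F (Set.toFinite F) (by simp) ?_
  intro A F hA hF ih hdisj
  have hdisjF : F.Pairwise Disjoint := hdisj.mono (Set.subset_insert _ _)
  have hdA : Disjoint A (⋃₀ F) := by
    rw [Set.disjoint_sUnion_right]
    intro B hB
    exact hdisj (Set.mem_insert _ _) (Set.mem_insert_of_mem _ hB)
      (fun h => hA (h ▸ hB))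
  have h1 : (⋃₀ insert A F).ncard = A.ncard + (⋃₀ F).ncard := by
    rw [Set.sUnion_insert, Set.ncard_union_eq hdA (Set.toFinite _) (Set.toFinite _)]
  have h2 : {B ∈ insert A F | Odd B.ncard} =
      (if Odd A.ncard then insert A {B ∈ F | Odd B.ncard} else {B ∈ F | Odd B.ncard}) := by
    split_ifs with hodd
    · ext B
      simp only [Set.mem_setOf_eq, Set.mem_insert_iff]
      constructor
      · rintro ⟨(rfl | hB), hoddB⟩
        · exact Or.inl rfl
        · exact Or.inr ⟨hB, hoddB⟩
      · rintro (rfl | ⟨hB, hoddB⟩)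
        · exact ⟨Or.inl rfl, hodd⟩
        · exact ⟨Or.inr hB, hoddB⟩
    · ext B
      simp only [Set.mem_setOf_eq, Set.mem_insert_iff]
      constructor
      · rintro ⟨(rfl | hB), hoddB⟩
        · exact absurd hoddB hodd
        · exact ⟨hB, hoddB⟩
      · rintro ⟨hB, hoddB⟩
        exact ⟨Or.inr hB, hoddB⟩
  have ih' := ih hdisjF
  split_ifs at h2 with hodd
  · have h3 : {B ∈ insert A F | Odd B.ncard}.ncard = {B ∈ F | Odd B.ncard}.ncard + 1 := by
      rw [h2, Set.ncard_insert_of_notMem (fun h => hA h.1) (Set.toFinite _)]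
    rw [h1, h3]
    rw [Nat.odd_iff] at hodd
    omega
  · have h3 : {B ∈ insert A F | Odd B.ncard}.ncard = {B ∈ F | Odd B.ncard}.ncard := by rw [h2]
    rw [h1, h3]
    have : A.ncard % 2 = 0 := by
      rw [Nat.odd_iff] at hodd; omega
    omega

lemma comps_pairwise_disjoint : {A | IsCompOf G D A}.Pairwise Disjoint :=
  fun A hA B hB hne => isCompOf_disjoint hA hB hne

/-- number of odd components has same parity as the ground set -/
lemma nOdd_parity (G : SimpleGraph V) (D : Set V) :
    {A | IsCompOf G D A ∧ Odd A.ncard}.ncard % 2 = D.ncard % 2 := by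
  have h := parity_sUnion {A | IsCompOf G D A} comps_pairwise_disjoint
  rw [sUnion_isCompOf, Set.sep_setOf] at h
  exact h.symm

/-- generic counting of a predicate on components after shrinking -/
lemma comps_pred_split (P : Set V → Prop) (hC : IsCompOf G D C) (hW : W ⊆ C)
    (hWne : W.Nonempty) :
    {A | IsCompOf G (D \ W) A ∧ P A} =
      ({A | IsCompOf G D A ∧ P A} \ {C}) ∪ {A | IsCompOf G (C \ W) A ∧ P A} := by
  ext A
  simp only [Set.mem_setOf_eq, Set.mem_union, Set.mem_diff, Set.mem_singleton_iff]
  rw [isCompOf_sdiff hC hW]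
  tauto

lemma comps_CW_not_C (hW : W ⊆ C) (hWne : W.Nonempty) (h : IsCompOf G (C \ W) A) : A ≠ C := by
  intro rfl'
  obtain ⟨w, hw⟩ := hWne
  have := isCompOf_subset h
  rw [rfl'] at this
  exact (this (hW hw)).2 hw

lemma comps_split_disjoint (hC : IsCompOf G D C) (hW : W ⊆ C) {P : Set V → Prop} :
    Disjoint ({A | IsCompOf G D A ∧ P A} \ {C}) {A | IsCompOf G (C \ W) A ∧ P A} := by
  rw [Set.disjoint_left]
  rintro A ⟨⟨hA, _⟩, hne⟩ ⟨hA', _⟩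
  have h1 : A ⊆ C := (isCompOf_subset hA').trans diff_subset
  have h2 := isCompOf_disjoint hA hC (by simpa using hne)
  obtain ⟨a, ha⟩ := isCompOf_nonempty hA
  exact Set.disjoint_left.mp h2 ha (h1 ha)

lemma comps_pred_count (P : Set V → Prop) (hC : IsCompOf G D C) (hW : W ⊆ C)
    (hWne : W.Nonempty) (hPC : P C) :
    {A | IsCompOf G (D \ W) A ∧ P A}.ncard + 1 =
      {A | IsCompOf G D A ∧ P A}.ncard + {A | IsCompOf G (C \ W) A ∧ P A}.ncard := by
  rw [comps_pred_split P hC hW hWne,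
    Set.ncard_union_eq (comps_split_disjoint hC hW) (Set.toFinite _) (Set.toFinite _)]
  have : ({A | IsCompOf G D A ∧ P A} \ {C}).ncard + 1 = {A | IsCompOf G D A ∧ P A}.ncard :=
    Set.ncard_diff_singleton_add_one ⟨hC, hPC⟩ (Set.toFinite _)
  omega

lemma comps_pred_count' (P : Set V → Prop) (hC : IsCompOf G D C) (hW : W ⊆ C)
    (hWne : W.Nonempty) (hPC : ¬ P C) :
    {A | IsCompOf G (D \ W) A ∧ P A}.ncard =
      {A | IsCompOf G D A ∧ P A}.ncard + {A | IsCompOf G (C \ W) A ∧ P A}.ncard := by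
  rw [comps_pred_split P hC hW hWne,
    Set.ncard_union_eq (comps_split_disjoint hC hW) (Set.toFinite _) (Set.toFinite _)]
  have : {A | IsCompOf G D A ∧ P A} \ {C} = {A | IsCompOf G D A ∧ P A} := by
    rw [Set.diff_singleton_eq_self]
    rintro ⟨_, h⟩
    exact hPC h
  rw [this]

end Counting
section PM
variable {G : SimpleGraph V} {D A A' C W : Set V}

lemma not_hasPM_of_odd (h : Odd A.ncard) : ¬ HasPM G A := by
  rintro ⟨M, hM⟩
  have : Fintype ↥A := Fintype.ofFinite _
  have heven : Even (Fintype.card ↥A) := hM.even_card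
  rw [Set.ncard_eq_toFinset_card'] at h
  rw [Set.toFinset_card] at h
  exact (Nat.not_even_iff_odd.mpr h) heven

lemma hasPM_empty : HasPM G (∅ : Set V) := by
  refine ⟨⊥, fun v hv => absurd hv (by simp), fun v => absurd v.2 (Set.notMem_empty _)⟩

lemma hasPM_sUnion {F : Set (Set V)} (hdisj : F.Pairwise Disjoint)
    (hpm : ∀ A ∈ F, HasPM G A) : HasPM G (⋃₀ F) := by
  classical
  choose M hM using hpm
  have hsub : ∀ A (hA : A ∈ F), A ⊆ ⋃₀ F := fun A hA x hx => ⟨A, hA, hx⟩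
  let emb : ∀ (A : ↥F), G.induce A.1 →g G.induce (⋃₀ F) := fun A =>
    ⟨Set.inclusion (hsub A.1 A.2), fun h => h⟩
  let N : ↥F → Subgraph (G.induce (⋃₀ F)) := fun A => (M A.1 A.2).map (emb A)
  have hNverts : ∀ (A : ↥F) (z : ↥(⋃₀ F)), z ∈ (N A).verts → (z : V) ∈ A.1 := by
    rintro A z hz
    obtain ⟨⟨y, hy⟩, _, rfl⟩ := hz
    exact hy
  refine ⟨⨆ A : ↥F, N A, ?_, ?_⟩
  · apply Subgraph.IsMatching.iSup
    · intro A
      exact ((hM A.1 A.2).1).map (emb A) (Set.inclusion_injective (hsub A.1 A.2))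
    · intro A B hne
      refine Set.disjoint_of_subset (Subgraph.support_subset_verts _)
        (Subgraph.support_subset_verts _) ?_
      rw [Set.disjoint_left]
      intro z hzA hzB
      have hAB : A.1 ≠ B.1 := fun h => hne (Subtype.ext h)
      exact Set.disjoint_left.mp (hdisj A.2 B.2 hAB) (hNverts A z hzA) (hNverts B z hzB)
  · intro v
    obtain ⟨A, hA, hv⟩ := v.2
    rw [Subgraph.verts_iSup]
    refine Set.mem_iUnion.mpr ⟨⟨A, hA⟩, ⟨⟨v.1, hv⟩, (hM A hA).2 _, Subtype.ext rfl⟩⟩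

lemma hasPM_union (h : HasPM G A) (h' : HasPM G A') (hd : Disjoint A A') :
    HasPM G (A ∪ A') := by
  have h1 : ({A, A'} : Set (Set V)).Pairwise Disjoint := by
    intro x hx y hy hne
    rcases hx with rfl | hx <;> rcases hy with rfl | hy
    · exact absurd rfl hne
    · rw [Set.mem_singleton_iff] at hy; subst hy; exact hd
    · rw [Set.mem_singleton_iff] at hx; subst hx; exact hd.symm
    · rw [Set.mem_singleton_iff] at hx hy; subst hx; subst hy; exact absurd rfl hne
  have h2 : ∀ B ∈ ({A, A'} : Set (Set V)), HasPM G B := by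
    intro B hB
    rcases hB with rfl | hB
    · exact h
    · rw [Set.mem_singleton_iff] at hB; subst hB; exact h'
  have key := hasPM_sUnion h1 h2
  rwa [Set.sUnion_pair] at key

lemma hasPM_pair {u w : V} (h : G.Adj u w) : HasPM G ({u, w} : Set V) := by
  have hu : u ∈ ({u, w} : Set V) := Set.mem_insert _ _
  have hw : w ∈ ({u, w} : Set V) := Set.mem_insert_of_mem _ rfl
  have hadj : (G.induce ({u, w} : Set V)).Adj ⟨u, hu⟩ ⟨w, hw⟩ := h
  refine ⟨(G.induce ({u, w} : Set V)).subgraphOfAdj hadj,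
    Subgraph.IsMatching.subgraphOfAdj hadj, ?_⟩
  rintro ⟨v, hv | hv⟩
  · subst hv; simp
  · rw [Set.mem_singleton_iff] at hv; subst hv; simp

end PM
/-- union of the components without perfect matchings -/
def badU (G : SimpleGraph V) (D : Set V) : Set V :=
  ⋃₀ {A | IsCompOf G D A ∧ ¬ HasPM G A}

section Surgery
variable {G : SimpleGraph V} {D A C W : Set V}

lemma badU_subset : badU G D ⊆ D := by
  rintro x ⟨A, ⟨hA, _⟩, hx⟩
  exact isCompOf_subset hA hx

lemma subset_badU (h : IsCompOf G D C) (hb : ¬ HasPM G C) : C ⊆ badU G D :=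
  fun x hx => ⟨C, ⟨h, hb⟩, hx⟩

lemma badU_shrink (hC : IsCompOf G D C) (hW : W ⊆ C) (hCbad : ¬ HasPM G C) :
    badU G (D \ W) ⊆ badU G D \ W := by
  rintro x ⟨A, ⟨hA, hAbad⟩, hx⟩
  rcases (isCompOf_sdiff hC hW A).mp hA with ⟨hA', hne⟩ | hA'
  · refine ⟨⟨A, ⟨hA', hAbad⟩, hx⟩, ?_⟩
    intro hxW
    exact Set.disjoint_left.mp (isCompOf_disjoint hA' hC hne) hx (hW hxW)
  · have hsub := isCompOf_subset hA'
    exact ⟨subset_badU hC hCbad (hsub hx).1, (hsub hx).2⟩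

lemma badU_lt (hC : IsCompOf G D C) (hW : W ⊆ C) (hWne : W.Nonempty)
    (hCbad : ¬ HasPM G C) : (badU G (D \ W)).ncard < (badU G D).ncard := by
  obtain ⟨w, hw⟩ := hWne
  apply Set.ncard_lt_ncard _ (Set.toFinite _)
  rw [Set.ssubset_def]
  refine ⟨(badU_shrink hC hW hCbad).trans diff_subset, fun h => ?_⟩
  have hwbad : w ∈ badU G D := subset_badU hC hCbad (hW hw)
  exact (badU_shrink hC hW hCbad (h hwbad)).2 hw

/-- Core bound: in the extremal situation, an odd component `C` satisfies the strict
Tutte-type inequality for every nonempty `W ⊆ C`. -/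
lemma key_bound (hC : IsCompOf G D C) (hCodd : Odd C.ncard) (hW : W ⊆ C) (hWne : W.Nonempty)
    (hmax : {A | IsCompOf G (D \ W) A ∧ Odd A.ncard}.ncard ≤
      {A | IsCompOf G D A ∧ Odd A.ncard}.ncard + W.ncard)
    (hmin : {A | IsCompOf G (D \ W) A ∧ Odd A.ncard}.ncard =
        {A | IsCompOf G D A ∧ Odd A.ncard}.ncard + W.ncard →
      (badU G D).ncard ≤ (badU G (D \ W)).ncard) :
    {A | IsCompOf G (C \ W) A ∧ Odd A.ncard}.ncard + 1 ≤ W.ncard := by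
  have hsplit := comps_pred_count (fun A => Odd A.ncard) hC hW hWne hCodd
  have hCbad : ¬ HasPM G C := not_hasPM_of_odd hCodd
  have hne : {A | IsCompOf G (D \ W) A ∧ Odd A.ncard}.ncard ≠
      {A | IsCompOf G D A ∧ Odd A.ncard}.ncard + W.ncard := by
    intro h
    exact absurd (hmin h) (not_le.mpr (badU_lt hC hW hWne hCbad))
  -- parity
  have hpar := nOdd_parity G (C \ W)
  have hcard : (C \ W).ncard = C.ncard - W.ncard := Set.ncard_diff hW (Set.toFinite _)
  have hWC : W.ncard ≤ C.ncard := Set.ncard_le_ncard hW (Set.toFinite _)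
  have hWpos : 1 ≤ W.ncard := Set.ncard_pos (Set.toFinite _) |>.mpr hWne
  rw [Nat.odd_iff] at hCodd
  omega

/-- Core bound for an even component in the extremal situation: it must have a
perfect matching. -/
lemma key_even {w : V} (hC : IsCompOf G D C) (hCev : ¬ Odd C.ncard) (hCbad : ¬ HasPM G C)
    (hw : w ∈ C)
    (hmax : {A | IsCompOf G (D \ {w}) A ∧ Odd A.ncard}.ncard ≤
      {A | IsCompOf G D A ∧ Odd A.ncard}.ncard + 1)
    (hmin : {A | IsCompOf G (D \ {w}) A ∧ Odd A.ncard}.ncard =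
        {A | IsCompOf G D A ∧ Odd A.ncard}.ncard + 1 →
      (badU G D).ncard ≤ (badU G (D \ {w})).ncard) : False := by
  have hWsub : ({w} : Set V) ⊆ C := Set.singleton_subset_iff.mpr hw
  have hsplit := comps_pred_count' (fun A => Odd A.ncard) hC hWsub
    (Set.singleton_nonempty w) hCev
  have hpar := nOdd_parity G (C \ {w})
  have hcard : (C \ {w}).ncard = C.ncard - 1 := by
    rw [Set.ncard_diff hWsub (Set.toFinite _), Set.ncard_singleton]
  have hCpos : 1 ≤ C.ncard := Set.ncard_pos (Set.toFinite _) |>.mpr ⟨w, hw⟩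
  rw [Nat.odd_iff] at hCev
  have hm1 : {A | IsCompOf G (C \ {w}) A ∧ Odd A.ncard}.ncard = 1 := by omega
  have heq : {A | IsCompOf G (D \ {w}) A ∧ Odd A.ncard}.ncard =
      {A | IsCompOf G D A ∧ Odd A.ncard}.ncard + 1 := by omega
  exact absurd (hmin heq) (not_le.mpr (badU_lt hC hWsub (Set.singleton_nonempty w) hCbad))

end Surgery
open scoped Classical in
/-- Tutte's theorem (hard direction), set-based, by strong induction. -/
theorem hasPM_of_tutte (G : SimpleGraph V) :
    ∀ n (B : Set V), B.ncard ≤ n →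
      (∀ T ⊆ B, ({A | IsCompOf G (B \ T) A ∧ Odd A.ncard}.ncard : ℤ) ≤ T.ncard) →
      HasPM G B := by
  intro n
  induction n with
  | zero =>
    intro B hB _
    have hB0 : B.ncard = 0 := by omega
    rw [(Set.ncard_eq_zero (Set.toFinite _)).mp hB0]
    exact hasPM_empty
  | succ n ih =>
    intro B hBcard htutte
    set dfB : Set V → ℤ := fun S => ({A | IsCompOf G (B \ S) A ∧ Odd A.ncard}.ncard : ℤ) - S.ncard
      with hdfB
    -- choose S maximizing dfB among subsets of B
    have hne0 : Nonempty {S : Set V // S ⊆ B} := ⟨⟨∅, Set.empty_subset B⟩⟩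
    obtain ⟨S₀, hS₀max⟩ := Finite.exists_max (fun S : {S : Set V // S ⊆ B} => dfB S.1)
    -- then minimizing the bad set among maximizers
    have hne : Nonempty {S : Set V // S ⊆ B ∧ dfB S = dfB S₀.1} := ⟨⟨S₀.1, S₀.2, rfl⟩⟩
    obtain ⟨Smin, hSmin⟩ := Finite.exists_min
      (fun S : {S : Set V // S ⊆ B ∧ dfB S = dfB S₀.1} => (badU G (B \ S.1)).ncard)
    obtain ⟨S, hSB, hSdf⟩ := Smin
    have hmax : ∀ T ⊆ B, dfB T ≤ dfB S := fun T hT => by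
      rw [hSdf]; exact hS₀max ⟨T, hT⟩
    have hmin : ∀ T ⊆ B, dfB T = dfB S → (badU G (B \ S)).ncard ≤ (badU G (B \ T)).ncard :=
      fun T hT hdf => hSmin ⟨T, hT, hdf.trans hSdf⟩
    -- the maximum deficiency is 0
    have hdfS0 : dfB S = 0 := by
      have h1 := htutte S hSB
      have h2 := hmax ∅ (Set.empty_subset B)
      have h3 : dfB ∅ = ({A | IsCompOf G (B \ ∅) A ∧ Odd A.ncard}.ncard : ℤ) := by
        simp [hdfB]
      have h4 : (0 : ℤ) ≤ dfB ∅ := by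
        rw [h3]; exact Int.ofNat_nonneg _
      have h5 : dfB S ≤ 0 := by
        simp only [hdfB]; omega
      omega
    have hOS : ({A | IsCompOf G (B \ S) A ∧ Odd A.ncard}.ncard : ℤ) = S.ncard := by
      simp only [hdfB] at hdfS0; omega
    -- surgery helpers: removing W ⊆ (B \ S) from the ground set
    have hgen : ∀ W ⊆ (B \ S), W.Nonempty →
        ({A | IsCompOf G ((B \ S) \ W) A ∧ Odd A.ncard}.ncard : ℤ) ≤
          {A | IsCompOf G (B \ S) A ∧ Odd A.ncard}.ncard + W.ncard ∧
        (({A | IsCompOf G ((B \ S) \ W) A ∧ Odd A.ncard}.ncard : ℤ) =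
          {A | IsCompOf G (B \ S) A ∧ Odd A.ncard}.ncard + W.ncard →
          (badU G (B \ S)).ncard ≤ (badU G ((B \ S) \ W)).ncard) := by
      intro W hWD hWne
      have hWB : W ⊆ B := hWD.trans diff_subset
      have hdisj : Disjoint S W := Set.disjoint_left.mpr (fun x hxS hxW => (hWD hxW).2 hxS)
      have hUB : S ∪ W ⊆ B := Set.union_subset hSB hWB
      have hset : B \ (S ∪ W) = (B \ S) \ W := by rw [Set.diff_diff]
      have hcard : (S ∪ W).ncard = S.ncard + W.ncard :=
        Set.ncard_union_eq hdisj (Set.toFinite _) (Set.toFinite _)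
      have h1 := hmax (S ∪ W) hUB
      simp only [hdfB] at h1
      rw [hset, hcard] at h1
      push_cast at h1
      constructor
      · omega
      · intro heq
        have h2 : dfB (S ∪ W) = dfB S := by
          simp only [hdfB]
          rw [hset, hcard]
          push_cast
          omega
        have h3 := hmin (S ∪ W) hUB h2
        rwa [hset] at h3
    -- even components have perfect matchings
    have heven : ∀ C, IsCompOf G (B \ S) C → ¬ Odd C.ncard → HasPM G C := by
      intro C hC hCev
      by_contra hCbad
      obtain ⟨w, hw⟩ := isCompOf_nonempty hC
      have hwD : ({w} : Set V) ⊆ (B \ S) := Set.singleton_subset_iff.mpr (isCompOf_subset hC hw)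
      obtain ⟨h1, h2⟩ := hgen {w} hwD (Set.singleton_nonempty w)
      rw [Set.ncard_singleton] at h1 h2
      refine key_even hC hCev hCbad hw (by exact_mod_cast h1) (fun h => h2 (by exact_mod_cast h))
    -- odd components are factor-critical
    have hodd : ∀ C, IsCompOf G (B \ S) C → Odd C.ncard → ∀ v ∈ C, HasPM G (C \ {v}) := by
      intro C hC hCodd v hv
      have hstar : ∀ W ⊆ C, W.Nonempty →
          {A | IsCompOf G (C \ W) A ∧ Odd A.ncard}.ncard + 1 ≤ W.ncard := by
        intro W hWC hWne
        have hWD : W ⊆ (B \ S) := hWC.trans (isCompOf_subset hC)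
        obtain ⟨h1, h2⟩ := hgen W hWD hWne
        exact key_bound hC hCodd hWC hWne (by exact_mod_cast h1) (fun h => h2 (by exact_mod_cast h))
      refine ih (C \ {v}) ?_ ?_
      · have h1 : C ⊆ B := (isCompOf_subset hC).trans diff_subset
        have h2 : C.ncard ≤ B.ncard := Set.ncard_le_ncard h1 (Set.toFinite _)
        have h3 : (C \ {v}).ncard = C.ncard - 1 := by
          rw [Set.ncard_diff (Set.singleton_subset_iff.mpr hv) (Set.toFinite _),
            Set.ncard_singleton]
        have h4 : 1 ≤ C.ncard := Set.ncard_pos (Set.toFinite _) |>.mpr ⟨v, hv⟩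
        omega
      · intro T hT
        have hsub : insert v T ⊆ C := Set.insert_subset hv (hT.trans diff_subset)
        have hvT : v ∉ T := fun h => (hT h).2 rfl
        have h5 : (C \ {v}) \ T = C \ insert v T := by
          rw [Set.diff_diff, Set.singleton_union]
        have h6 := hstar (insert v T) hsub (Set.insert_nonempty _ _)
        rw [Set.ncard_insert_of_notMem hvT (Set.toFinite _)] at h6
        rw [h5]
        exact_mod_cast by omega
    -- ====== assembly of the perfect matching ======
    set O : Set (Set V) := {A | IsCompOf G (B \ S) A ∧ Odd A.ncard} with hO
    have hOcard : O.ncard = S.ncard := by exact_mod_cast hOS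
    set r : SetRel ↥S (Set V) := {p | p.2 ∈ O ∧ ∃ w ∈ p.2, G.Adj p.1.1 w} with hr
    haveI : ∀ a : ↥S, Fintype (SetRel.image r {a}) := fun a => Fintype.ofFinite _
    have hallCond : ∀ T' : Finset ↥S, T'.card ≤ Fintype.card (SetRel.image r ↑T') := by
      intro T'
      set T : Set V := Subtype.val '' (↑T' : Set ↥S) with hT
      have hTS : T ⊆ S := by rintro x ⟨u, _, rfl⟩; exact u.2
      have hTcard : T.ncard = T'.card := by
        rw [hT, Set.ncard_image_of_injective _ Subtype.val_injective, Set.ncard_coe_finset]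
      set N : Set (Set V) := SetRel.image r ↑T' with hN
      have hNO : N ⊆ O := by rintro A ⟨u, _, hru⟩; exact hru.1
      have hcompl : O \ N ⊆ {A | IsCompOf G (B \ (S \ T)) A ∧ Odd A.ncard} := by
        rintro A ⟨⟨hA, hAodd⟩, hAN⟩
        refine ⟨isCompOf_grow hA (fun x hx => ⟨hx.1, fun h2 => hx.2 h2.1⟩) ?_, hAodd⟩
        intro x hxA y hy hadj
        have hyS : y ∈ S := by
          by_contra h
          exact hy.2 ⟨hy.1.1, h⟩
        have hyT : y ∈ T := by
          by_contra h
          exact hy.1.2 ⟨hyS, h⟩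
        obtain ⟨u, huT', rfl⟩ := hyT
        exact hAN ⟨u, huT', ⟨hA, hAodd⟩, x, hxA, hadj.symm⟩
      have h1 : (O \ N).ncard ≤ (S \ T).ncard := by
        have ht := htutte (S \ T) (Set.diff_subset.trans hSB)
        have hsub := Set.ncard_le_ncard hcompl (Set.toFinite _)
        exact hsub.trans (by exact_mod_cast ht)
      have h2 : O.ncard ≤ (O \ N).ncard + N.ncard := by
        refine (Set.ncard_le_ncard (Set.subset_diff_union O N) (Set.toFinite _)).trans ?_
        exact Set.ncard_union_le _ _
      have h3 : (S \ T).ncard = S.ncard - T.ncard := Set.ncard_diff hTS (Set.toFinite _)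
      have h4 : T.ncard ≤ S.ncard := Set.ncard_le_ncard hTS (Set.toFinite _)
      have h5 : Fintype.card (SetRel.image r ↑T') = N.ncard := by
        rw [hN, ← Nat.card_coe_set_eq, Nat.card_eq_fintype_card]
      omega
    obtain ⟨f, hfinj, hfr⟩ :=
      (Fintype.all_card_le_rel_image_card_iff_exists_injective r).mp hallCond
    have hrangecard : (Set.range f).ncard = S.ncard := by
      rw [← Set.image_univ, Set.ncard_image_of_injective _ hfinj, Set.ncard_univ,
        Nat.card_coe_set_eq]
    have hrange : Set.range f = O := by
      apply Set.eq_of_subset_of_ncard_le (fun A hA => ?_) (by omega) (Set.toFinite _)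
      obtain ⟨u, rfl⟩ := hA
      exact (hfr u).1
    set piece : Set V → Set V :=
      fun A => if h : A ∈ Set.range f then insert (h.choose).1 A else A with hpiece
    have subset_piece : ∀ A, A ⊆ piece A := by
      intro A
      by_cases h : A ∈ Set.range f
      · simp only [hpiece, dif_pos h]
        exact Set.subset_insert _ _
      · simp only [hpiece, dif_neg h]
        exact fun x hx => hx
    have mem_piece_elim : ∀ {A x}, x ∈ piece A →
        x ∈ A ∨ ∃ h : A ∈ Set.range f, x = (h.choose).1 := by
      intro A x hx
      by_cases h : A ∈ Set.range f
      · simp only [hpiece, dif_pos h, Set.mem_insert_iff] at hx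
        rcases hx with rfl | hx
        · exact Or.inr ⟨h, rfl⟩
        · exact Or.inl hx
      · simp only [hpiece, dif_neg h] at hx
        exact Or.inl hx
    have hpm_piece : ∀ A, IsCompOf G (B \ S) A → HasPM G (piece A) := by
      intro A hA
      by_cases h : A ∈ Set.range f
      · have hu : f h.choose = A := h.choose_spec
        have hrA := hfr h.choose
        rw [hu] at hrA
        obtain ⟨hAO, w, hwA, hadj⟩ := hrA
        have huS : (h.choose).1 ∈ S := (h.choose).2
        have huA : (h.choose).1 ∉ A := fun hc => (isCompOf_subset hA hc).2 huS
        have hAw : HasPM G (A \ {w}) := hodd A hA hAO.2 w hwA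
        have hpair : HasPM G {(h.choose).1, w} := hasPM_pair hadj
        have hd2 : Disjoint (A \ {w}) {(h.choose).1, w} := by
          rw [Set.disjoint_right]
          rintro x (rfl | rfl)
          · exact fun hc => huA hc.1
          · exact fun hc => hc.2 rfl
        have hun := hasPM_union hAw hpair hd2
        have hseteq : (A \ {w}) ∪ {(h.choose).1, w} = insert (h.choose).1 A := by
          ext x
          simp only [Set.mem_union, Set.mem_diff, Set.mem_singleton_iff, Set.mem_insert_iff]
          constructor
          · rintro (⟨hxA, _⟩ | (rfl | rfl))
            · exact Or.inr hxA
            · exact Or.inl rfl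
            · exact Or.inr hwA
          · rintro (rfl | hxA)
            · exact Or.inr (Or.inl rfl)
            · by_cases hxw : x = w
              · exact Or.inr (Or.inr hxw)
              · exact Or.inl ⟨hxA, hxw⟩
        rw [hseteq] at hun
        simpa only [hpiece, dif_pos h] using hun
      · have hev : ¬ Odd A.ncard := fun hodd' => h (hrange.symm ▸ (⟨hA, hodd'⟩ : A ∈ O))
        simpa only [hpiece, dif_neg h] using heven A hA hev
    have hchoose_mem : ∀ {A} (h : A ∈ Set.range f), IsCompOf G (B \ S) A → True := fun _ _ => trivial
    have hpd : ∀ {A A'}, IsCompOf G (B \ S) A → IsCompOf G (B \ S) A' → A ≠ A' →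
        Disjoint (piece A) (piece A') := by
      intro A A' hA hA' hne
      have hd := isCompOf_disjoint hA hA' hne
      rw [Set.disjoint_left]
      intro x hx hx'
      rcases mem_piece_elim hx with hxA | ⟨h, rfl⟩ <;>
        rcases mem_piece_elim hx' with hxA' | hget
      · exact Set.disjoint_left.mp hd hxA hxA'
      · obtain ⟨h', rfl⟩ := hget
        exact (isCompOf_subset hA hxA).2 (h'.choose).2
      · exact (isCompOf_subset hA' hxA').2 (h.choose).2
      · obtain ⟨h', heq⟩ := hget
        apply hne
        have hc : h.choose = h'.choose := Subtype.ext heq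
        rw [← h.choose_spec, ← h'.choose_spec, hc]
    have hcover : ⋃₀ (piece '' {A | IsCompOf G (B \ S) A}) = B := by
      apply Set.Subset.antisymm
      · rintro x ⟨P, ⟨A, hA, rfl⟩, hx⟩
        rcases mem_piece_elim hx with hxA | ⟨h, rfl⟩
        · exact (isCompOf_subset hA hxA).1
        · exact hSB (h.choose).2
      · intro b hb
        by_cases hbS : b ∈ S
        · have hfu : f ⟨b, hbS⟩ ∈ Set.range f := ⟨⟨b, hbS⟩, rfl⟩
          refine ⟨piece (f ⟨b, hbS⟩), ⟨f ⟨b, hbS⟩, (hfr ⟨b, hbS⟩).1.1, rfl⟩, ?_⟩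
          have : hfu.choose = ⟨b, hbS⟩ := hfinj hfu.choose_spec
          simp only [hpiece, dif_pos hfu, this]
          exact Set.mem_insert _ _
        · have hbD : b ∈ ⋃₀ {A | IsCompOf G (B \ S) A} := by
            rw [sUnion_isCompOf]
            exact ⟨hb, hbS⟩
          obtain ⟨A, hA, hbA⟩ := hbD
          exact ⟨piece A, ⟨A, hA, rfl⟩, subset_piece A hbA⟩
    have hpairwise : (piece '' {A | IsCompOf G (B \ S) A}).Pairwise Disjoint := by
      rintro P ⟨A, hA, rfl⟩ Q ⟨A', hA', rfl⟩ hne2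
      exact hpd hA hA' (fun h => hne2 (by rw [h]))
    have hpms : ∀ P ∈ piece '' {A | IsCompOf G (B \ S) A}, HasPM G P := by
      rintro P ⟨A, hA, rfl⟩
      exact hpm_piece A hA
    have hfinal := hasPM_sUnion hpairwise hpms
    rwa [hcover] at hfinal

section Bridge
variable {G : SimpleGraph V}

lemma compSupp_injective (G : SimpleGraph V) (D : Set V) :
    Function.Injective (compSupp G D) := fun c c' h =>
  ConnectedComponent.supp_injective
    ((Set.image_injective.mpr Subtype.val_injective) h)

lemma oddComps_eq_nOdd (G : SimpleGraph V) (D : Set V) :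
    oddComps G D = {A | IsCompOf G D A ∧ Odd A.ncard}.ncard := by
  rw [oddComps]
  have himg : {A | IsCompOf G D A ∧ Odd A.ncard} =
      compSupp G D '' {c | Odd (compSupp G D c).ncard} := by
    ext A
    constructor
    · rintro ⟨⟨c, rfl⟩, hodd⟩
      exact ⟨c, hodd, rfl⟩
    · rintro ⟨c, hodd, rfl⟩
      exact ⟨⟨c, rfl⟩, hodd⟩
  rw [himg, Set.ncard_image_of_injective _ (compSupp_injective G D)]

lemma Df_eq_badU (G : SimpleGraph V) (S : Set V) : Df G S = (badU G Sᶜ).ncard := by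
  rw [Df]
  congr 1
  ext x
  constructor
  · intro hx
    obtain ⟨c, hc, hxc⟩ := Set.mem_iUnion₂.mp hx
    exact ⟨compSupp G Sᶜ c, ⟨⟨c, rfl⟩, hc⟩, hxc⟩
  · rintro ⟨A, ⟨⟨c, rfl⟩, hbad⟩, hx⟩
    exact Set.mem_iUnion₂.mpr ⟨c, hbad, hx⟩

end Bridge

theorem stmt_4' (G : SimpleGraph V) (S : Set V)
    (hmax : ∀ T : Set V, df G T ≤ df G S)
    (hmin : ∀ T : Set V, df G T = df G S → Df G S ≤ Df G T) :
    ∀ c : (G.induce Sᶜ).ConnectedComponent,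
      Odd (compSupp G Sᶜ c).ncard → FactorCritical G (compSupp G Sᶜ c) := by
  intro c hcodd v hv
  set C := compSupp G Sᶜ c with hCdef
  have hC : IsCompOf G Sᶜ C := ⟨c, rfl⟩
  have hCS : C ⊆ Sᶜ := isCompOf_subset hC
  -- the strict Tutte-type bound for nonempty subsets of C
  have hstar : ∀ W ⊆ C, W.Nonempty →
      {A | IsCompOf G (C \ W) A ∧ Odd A.ncard}.ncard + 1 ≤ W.ncard := by
    intro W hWC hWne
    have hWS : Disjoint S W := Set.disjoint_left.mpr (fun x hxS hxW => hCS (hWC hxW) hxS)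
    have hset : (S ∪ W)ᶜ = Sᶜ \ W := by
      rw [Set.compl_union, Set.diff_eq]
    have hcard : (S ∪ W).ncard = S.ncard + W.ncard :=
      Set.ncard_union_eq hWS (Set.toFinite _) (Set.toFinite _)
    have h1 := hmax (S ∪ W)
    rw [df, df, oddComps_eq_nOdd, oddComps_eq_nOdd, hset, hcard] at h1
    push_cast at h1
    apply key_bound hC hcodd hWC hWne (by omega)
    intro heq
    have h2 : df G (S ∪ W) = df G S := by
      rw [df, df, oddComps_eq_nOdd, oddComps_eq_nOdd, hset, hcard]
      push_cast
      omega
    have h3 := hmin (S ∪ W) h2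
    rwa [Df_eq_badU, Df_eq_badU, hset] at h3
  -- Tutte's condition for C \ {v}, then apply the set-based Tutte theorem
  apply hasPM_of_tutte G ((C \ {v}).ncard) (C \ {v}) le_rfl
  intro T hT
  have hsub : insert v T ⊆ C := Set.insert_subset hv (hT.trans diff_subset)
  have hvT : v ∉ T := fun h => (hT h).2 rfl
  have h5 : (C \ {v}) \ T = C \ insert v T := by
    rw [Set.diff_diff, Set.singleton_union]
  have h6 := hstar (insert v T) hsub (Set.insert_nonempty _ _)
  rw [Set.ncard_insert_of_notMem hvT (Set.toFinite _)] at h6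
  rw [h5]
  exact_mod_cast by omega

/-- If `S` maximizes `df` and, among such sets, minimizes `Df`, then every odd
`S`-component is factor-critical. -/
theorem stmt_4 (G : SimpleGraph V) (S : Set V)
    (hmax : ∀ T : Set V, df G T ≤ df G S)
    (hmin : ∀ T : Set V, df G T = df G S → Df G S ≤ Df G T) :
    ∀ c : (G.induce Sᶜ).ConnectedComponent,
      Odd (compSupp G Sᶜ c).ncard → FactorCritical G (compSupp G Sᶜ c) :=
  stmt_4' G S hmax hmin
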